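/- For every δ > 0 and ξ ∈ ℝ, define h(δ, ξ) := 6δ²ξ² ∑_{k=1}^∞ 1/(k²π²(k²π² + δ²ξ²)). Then 0 ≤ h(δ, ξ) ≤ 1, h(δ, ξ) ≤ δ²ξ², and L_δ(ξ) = ξ²(1 − h(δ, ξ)). -/

import Mathlib

open Real

noncomputable def Ldelta (δ ξ : ℝ) : ℝ :=
  6 * ξ ^ 2 * ∑' k : ℕ, 1 / (((k : ℝ) + 1) ^ 2 * Real.pi ^ 2 + δ ^ 2 * ξ ^ 2)

noncomputable def hdelta (δ ξ : ℝ) : ℝ :=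
  6 * δ ^ 2 * ξ ^ 2 * ∑' k : ℕ,
    1 / (((k : ℝ) + 1) ^ 2 * Real.pi ^ 2 *
      (((k : ℝ) + 1) ^ 2 * Real.pi ^ 2 + δ ^ 2 * ξ ^ 2))

lemma hasSum_succ_sq : HasSum (fun k : ℕ => 1 / ((k : ℝ) + 1) ^ 2) (Real.pi ^ 2 / 6) := by
  have h := hasSum_zeta_two
  rw [← hasSum_nat_add_iff' 1] at h
  simpa using h

theorem hdelta_bounds_and_Ldelta_eq (δ : ℝ) (hδ : 0 < δ) (ξ : ℝ) :
    0 ≤ hdelta δ ξ ∧ hdelta δ ξ ≤ 1 ∧ hdelta δ ξ ≤ δ ^ 2 * ξ ^ 2 ∧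
    Ldelta δ ξ = ξ ^ 2 * (1 - hdelta δ ξ) := by
  set b := δ ^ 2 * ξ ^ 2 with hbdef
  have hb0 : 0 ≤ b := by positivity
  have hπ : (0 : ℝ) < Real.pi ^ 2 := by positivity
  set a : ℕ → ℝ := fun k => ((k : ℝ) + 1) ^ 2 * Real.pi ^ 2 with hadef
  have ha : ∀ k, 0 < a k := fun k => by positivity
  have hab : ∀ k, 0 < a k + b := fun k => add_pos_of_pos_of_nonneg (ha k) hb0
  have haπ : ∀ k, Real.pi ^ 2 ≤ a k := by
    intro k
    have hk : (0 : ℝ) ≤ (k : ℝ) := Nat.cast_nonneg k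
    have : a k = ((k : ℝ) + 1) ^ 2 * Real.pi ^ 2 := rfl
    nlinarith [sq_nonneg (k : ℝ)]
  -- HasSum for 1/a k
  have hsA : HasSum (fun k => 1 / a k) (1 / 6 : ℝ) := by
    have h := (hasSum_succ_sq).mul_left (1 / Real.pi ^ 2)
    have heq : ∀ k : ℕ, (1 / Real.pi ^ 2) * (1 / ((k : ℝ) + 1) ^ 2) = 1 / a k := by
      intro k; rw [hadef]; field_simp
    rw [funext heq] at h
    rw [show (1 / Real.pi ^ 2 * (Real.pi ^ 2 / 6) : ℝ) = 1 / 6 by field_simp] at h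
    exact h
  have sA : Summable (fun k => 1 / a k) := hsA.summable
  have sB : Summable (fun k => 1 / (a k + b)) := by
    apply sA.of_nonneg_of_le (fun k => by positivity)
    intro k
    exact one_div_le_one_div_of_le (ha k) (le_add_of_nonneg_right hb0)
  have sC : Summable (fun k => 1 / (a k * (a k + b))) := by
    apply (sA.mul_left (1 / Real.pi ^ 2)).of_nonneg_of_le
      (fun k => by have := ha k; have := hab k; positivity)
    intro k
    rw [div_mul_div_comm, one_mul]
    apply one_div_le_one_div_of_le (by positivity)
    nlinarith [ha k, haπ k, hb0, hπ]
  have hCnn : 0 ≤ ∑' k, 1 / (a k * (a k + b)) :=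
    tsum_nonneg fun k => by have := ha k; have := hab k; positivity
  have hh : hdelta δ ξ = 6 * b * ∑' k, 1 / (a k * (a k + b)) := by
    rw [hdelta, hbdef]; ring
  refine ⟨?_, ?_, ?_, ?_⟩
  · rw [hh]; positivity
  · rcases eq_or_lt_of_le hb0 with hb | hb
    · rw [hh, ← hb]; simp
    · rw [hh]
      have hle : ∑' k, 1 / (a k * (a k + b)) ≤ ∑' k, (1 / b) * (1 / a k) := by
        apply Summable.tsum_le_tsum _ sC (sA.mul_left _)
        intro k
        rw [div_mul_div_comm, one_mul]
        apply one_div_le_one_div_of_le (by positivity)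
        nlinarith [ha k, hb0]
      have h2 : ∑' k, (1 / b) * (1 / a k) = (1 / b) * (1 / 6) := by
        rw [tsum_mul_left, hsA.tsum_eq]
      calc 6 * b * ∑' k, 1 / (a k * (a k + b))
          ≤ 6 * b * ((1 / b) * (1 / 6)) := by
            apply mul_le_mul_of_nonneg_left (hle.trans_eq h2) (by positivity)
        _ = 1 := by field_simp
  · rw [hh]
    have hle : ∑' k, 1 / (a k * (a k + b)) ≤ ∑' k, (1 / Real.pi ^ 2) * (1 / a k) := by
      apply Summable.tsum_le_tsum _ sC (sA.mul_left _)
      intro k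
      rw [div_mul_div_comm, one_mul]
      apply one_div_le_one_div_of_le (by positivity)
      nlinarith [ha k, haπ k, hb0, hπ]
    have h2 : ∑' k, (1 / Real.pi ^ 2) * (1 / a k) = 1 / (6 * Real.pi ^ 2) := by
      rw [tsum_mul_left, hsA.tsum_eq]; field_simp
    have hπ1 : (1 : ℝ) ≤ Real.pi ^ 2 := by nlinarith [Real.pi_gt_three]
    calc 6 * b * ∑' k, 1 / (a k * (a k + b))
        ≤ 6 * b * (1 / (6 * Real.pi ^ 2)) := by
          apply mul_le_mul_of_nonneg_left (hle.trans_eq h2) (by positivity)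
      _ = b / Real.pi ^ 2 := by field_simp
      _ ≤ b := div_le_self hb0 hπ1
  · have hpt : ∀ k, 1 / (a k + b) = 1 / a k - b * (1 / (a k * (a k + b))) := by
      intro k
      have h1 := (ha k).ne'
      have h2 := (hab k).ne'
      field_simp
      ring
    have hB2 : HasSum (fun k => b * (1 / (a k * (a k + b))))
        (b * ∑' k, 1 / (a k * (a k + b))) := sC.hasSum.mul_left b
    have key : ∑' k, 1 / (a k + b) = 1 / 6 - b * ∑' k, 1 / (a k * (a k + b)) := by
      rw [tsum_congr hpt]
      exact (hsA.sub hB2).tsum_eq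
    rw [Ldelta, hh]
    rw [show (∑' k : ℕ, 1 / (((k : ℝ) + 1) ^ 2 * Real.pi ^ 2 + δ ^ 2 * ξ ^ 2))
        = ∑' k, 1 / (a k + b) from rfl, key]
    ring
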